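/- (Validity of the Pythagorean definition of the obtuse angle via the principle of the Infinite.) Let θ be a real number with 0 < θ < π. Then π / 2 < θ if and only if there exists a natural number n with n odd such that ω n < θ, where ω n := Real.arccos (1 - (q n)^2 / (2 * (p n)^2)). -/

import Mathlib

mutual
/-- The Pythagorean side numbers. -/
def p : ℕ → ℕ
  | 0 => 1
  | n + 1 => p n + q n
/-- The Pythagorean diameter numbers. -/
def q : ℕ → ℕ
  | 0 => 1
  | n + 1 => 2 * p n + q n
end

lemma pq_pos : ∀ n : ℕ, 1 ≤ p n ∧ 1 ≤ q n := by
  intro n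
  induction n with
  | zero => simp [p, q]
  | succ n ih => simp only [p, q]; omega

lemma p_ge (n : ℕ) : n + 1 ≤ p n := by
  induction n with
  | zero => simp [p]
  | succ n ih => have := (pq_pos n).2; simp only [p]; omega

lemma pq_pell : ∀ n : ℕ, ((q n : ℤ))^2 - 2 * ((p n : ℤ))^2 = (-1)^(n+1) := by
  intro n
  induction n with
  | zero => simp [p, q]
  | succ n ih =>
    have h : ((q (n+1) : ℤ))^2 - 2 * ((p (n+1) : ℤ))^2
        = -(((q n : ℤ))^2 - 2 * ((p n : ℤ))^2) := by
      simp only [p, q]; push_cast; ring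
    rw [h, ih, pow_succ]; ring

lemma q_sq_odd {n : ℕ} (hn : Odd n) : ((q n : ℝ))^2 = 2 * ((p n : ℝ))^2 + 1 := by
  have h := pq_pell n
  have he : (-1 : ℤ)^(n+1) = 1 := (hn.add_one).neg_one_pow
  rw [he] at h
  have : ((q n : ℤ))^2 = 2 * ((p n : ℤ))^2 + 1 := by linarith
  exact_mod_cast congrArg (fun z : ℤ => (z : ℝ)) this

lemma omega_eq {n : ℕ} (hn : Odd n) :
    (1 : ℝ) - ((q n : ℝ))^2 / (2 * ((p n : ℝ))^2) = -1 / (2 * ((p n : ℝ))^2) := by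
  have hp : (0 : ℝ) < (p n : ℝ) := by exact_mod_cast (pq_pos n).1
  rw [q_sq_odd hn]
  field_simp
  ring

/-- The Pythagorean definition of the obtuse angle: an angle is obtuse iff it is greater than
some ω n with n odd. -/
theorem obtuse_iff_gt_omega_odd (θ : ℝ) (h0 : 0 < θ) (hπ : θ < Real.pi) :
    Real.pi / 2 < θ ↔
      ∃ n : ℕ, Odd n ∧ Real.arccos (1 - ((q n : ℝ)) ^ 2 / (2 * ((p n : ℝ)) ^ 2)) < θ := by
  constructor
  · intro hθ
    have h1 : Filter.Tendsto (fun n : ℕ => ((p (2*n+1) : ℝ))) Filter.atTop Filter.atTop := by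
      apply Filter.tendsto_atTop_mono (fun n => ?_) tendsto_natCast_atTop_atTop
      have := p_ge (2*n+1)
      exact_mod_cast Nat.le_trans (by omega) this
    have h2 : Filter.Tendsto (fun n : ℕ => 2 * ((p (2*n+1) : ℝ))^2) Filter.atTop Filter.atTop := by
      exact ((Filter.tendsto_pow_atTop two_ne_zero).comp h1).const_mul_atTop two_pos
    have h3 : Filter.Tendsto (fun n : ℕ => -1 / (2 * ((p (2*n+1) : ℝ))^2))
        Filter.atTop (nhds 0) := by
      have := (tendsto_inv_atTop_zero.comp h2).neg
      simpa [neg_div, one_div] using this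
    have h4 : Filter.Tendsto
        (fun n : ℕ => Real.arccos (-1 / (2 * ((p (2*n+1) : ℝ))^2)))
        Filter.atTop (nhds (Real.pi / 2)) := by
      have := (Real.continuous_arccos.continuousAt (x := 0)).tendsto.comp h3
      simpa [Real.arccos_zero, Function.comp_def] using this
    have h5 : ∀ᶠ n in Filter.atTop,
        Real.arccos (-1 / (2 * ((p (2*n+1) : ℝ))^2)) < θ :=
      h4.eventually_lt_const hθ
    obtain ⟨n, hn⟩ := h5.exists
    refine ⟨2*n+1, ⟨n, by ring⟩, ?_⟩
    rwa [omega_eq ⟨n, by ring⟩]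
  · rintro ⟨n, hn, hlt⟩
    have hp : (0 : ℝ) < (p n : ℝ) := by exact_mod_cast (pq_pos n).1
    have hneg : -1 / (2 * ((p n : ℝ))^2) < 0 :=
      div_neg_of_neg_of_pos (by norm_num) (by positivity)
    refine lt_of_le_of_lt ?_ hlt
    rw [omega_eq hn]
    exact le_of_not_gt fun h => absurd (Real.arccos_lt_pi_div_two.mp h) (not_lt.mpr hneg.le)
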